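/- Let n ≥ 2 and k ≥ 2. Then the k-solvable product (ℤ/nℤ) ∗_{s_k} (ℤ/nℤ) is an infinite solvable group. In particular, a verbal product of two finite groups can be infinite. -/

import Mathlib

open Monoid
open scoped commutatorElement

/-- The verbal subgroup `W(G)`: the subgroup of `G` generated by all evaluations of the
words of `W` at tuples of elements of `G`. -/
def verbalSubgroup (W : Set (FreeGroup ℕ)) (G : Type*) [Group G] : Subgroup G :=
  Subgroup.closure {x | ∃ w ∈ W, ∃ f : ℕ → G, FreeGroup.lift f w = x}

theorem lift_comp_eval {G H : Type*} [Group G] [Group H] (φ : G →* H) (f : ℕ → G)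
    (w : FreeGroup ℕ) : φ (FreeGroup.lift f w) = FreeGroup.lift (φ ∘ f) w := by
  have h : φ.comp (FreeGroup.lift f) = FreeGroup.lift (φ ∘ f) :=
    FreeGroup.ext_hom _ _ (fun a => by simp)
  exact DFunLike.congr_fun h w

theorem verbalSubgroup_map_le {G H : Type*} [Group G] [Group H] (W : Set (FreeGroup ℕ))
    (φ : G →* H) : (verbalSubgroup W G).map φ ≤ verbalSubgroup W H := by
  rw [verbalSubgroup, MonoidHom.map_closure, Subgroup.closure_le]
  rintro x ⟨y, ⟨w, hw, f, rfl⟩, rfl⟩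
  exact Subgroup.subset_closure ⟨w, hw, φ ∘ f, (lift_comp_eval φ f w).symm⟩

/-- Verbal subgroups are normal. -/
instance verbalSubgroup_normal (W : Set (FreeGroup ℕ)) (G : Type*) [Group G] :
    (verbalSubgroup W G).Normal := by
  constructor
  intro n hn g
  have h := verbalSubgroup_map_le (G := G) (H := G) W (MulAut.conj g).toMonoidHom
  have h2 : (MulAut.conj g).toMonoidHom n ∈ verbalSubgroup W G := h ⟨n, hn, rfl⟩
  simpa using h2

/-- The subgroup `[A,B]` of the free product `A ∗ B` generated by the commutators
`[a,b] = a * b * a⁻¹ * b⁻¹` with `a ∈ A`, `b ∈ B`. -/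
def commSubgroup (A B : Type*) [Group A] [Group B] : Subgroup (Coprod A B) :=
  Subgroup.closure {x | ∃ (a : A) (b : B), x = ⁅(Coprod.inl a : Coprod A B), Coprod.inr b⁆}

/-- The kernel of the verbal product: (the normal closure of) `W(A ∗ B) ∩ [A,B]`.
Since `W(A ∗ B) ∩ [A,B]` is in fact a normal subgroup of `A ∗ B`, taking the normal
closure does not change the subgroup. -/
def verbalProductKer (W : Set (FreeGroup ℕ)) (A B : Type*) [Group A] [Group B] :
    Subgroup (Coprod A B) :=
  Subgroup.normalClosure ((verbalSubgroup W (Coprod A B) ⊓ commSubgroup A B : Subgroup _) : Set _)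

instance verbalProductKer_normal (W : Set (FreeGroup ℕ)) (A B : Type*) [Group A] [Group B] :
    (verbalProductKer W A B).Normal := Subgroup.normalClosure_normal

/-- The verbal product `A ∗_W B := (A ∗ B)/(W(A ∗ B) ∩ [A,B])`. -/
abbrev VerbalProduct (W : Set (FreeGroup ℕ)) (A B : Type*) [Group A] [Group B] : Type _ :=
  Coprod A B ⧸ verbalProductKer W A B

/-- The quotient homomorphism `q : A ∗ B → A ∗_W B`. -/
def vq (W : Set (FreeGroup ℕ)) (A B : Type*) [Group A] [Group B] :
    Coprod A B →* VerbalProduct W A B :=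
  QuotientGroup.mk' (verbalProductKer W A B)

/-- The copy of `A` inside the verbal product `A ∗_W B`. -/
def vinl (W : Set (FreeGroup ℕ)) (A B : Type*) [Group A] [Group B] :
    A →* VerbalProduct W A B := (vq W A B).comp Coprod.inl

/-- The copy of `B` inside the verbal product `A ∗_W B`. -/
def vinr (W : Set (FreeGroup ℕ)) (A B : Type*) [Group A] [Group B] :
    B →* VerbalProduct W A B := (vq W A B).comp Coprod.inr

/-- `[A,B]^w`, the image of `[A,B]` in the verbal product `A ∗_W B`. -/
def commW (W : Set (FreeGroup ℕ)) (A B : Type*) [Group A] [Group B] :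
    Subgroup (VerbalProduct W A B) := (commSubgroup A B).map (vq W A B)

/-- The words `s_k` defining solvable products: `s_1 = [x_1, x_2]` and
`s_k(x_1, …, x_{2^k}) = [s_{k-1}(x_1, …, x_{2^{k-1}}), s_{k-1}(x_{2^{k-1}+1}, …, x_{2^k})]`
(generators indexed from `0`; the second factor is obtained by shifting the generators
by `2^{k-1}`). -/
def sWord : ℕ → FreeGroup ℕ
  | 0 => 1
  | 1 => ⁅FreeGroup.of 0, FreeGroup.of 1⁆
  | (k + 2) => ⁅sWord (k + 1),
      FreeGroup.lift (fun i => FreeGroup.of (i + 2 ^ (k + 1))) (sWord (k + 1))⁆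

/-! ### Auxiliary lemmas -/

theorem lift_lift_shift {T : Type*} [Group T] (f : ℕ → T) (m : ℕ) (w : FreeGroup ℕ) :
    FreeGroup.lift f (FreeGroup.lift (fun i => FreeGroup.of (i + m)) w)
      = FreeGroup.lift (fun i => f (i + m)) w := by
  rw [lift_comp_eval (FreeGroup.lift f) (fun i => FreeGroup.of (i + m)) w]
  have h : (⇑(FreeGroup.lift f) ∘ fun i => FreeGroup.of (i + m)) = fun i => f (i + m) :=
    funext fun i => by simp
  rw [h]

theorem sWord_mem_derivedSeries {T : Type*} [Group T] :
    ∀ (k : ℕ) (f : ℕ → T), FreeGroup.lift f (sWord k) ∈ derivedSeries T k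
  | 0, f => by simp [sWord]
  | 1, f => by
      rw [sWord, map_commutatorElement]
      exact Subgroup.commutator_mem_commutator (Subgroup.mem_top _) (Subgroup.mem_top _)
  | (k+2), f => by
      rw [sWord, map_commutatorElement, lift_lift_shift]
      exact Subgroup.commutator_mem_commutator (sWord_mem_derivedSeries (k+1) f)
        (sWord_mem_derivedSeries (k+1) _)

theorem sWord_congr {T : Type*} [Group T] :
    ∀ (k : ℕ) (f g : ℕ → T), (∀ i < 2 ^ k, f i = g i) →
      FreeGroup.lift f (sWord k) = FreeGroup.lift g (sWord k)
  | 0, f, g, _ => by simp [sWord]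
  | 1, f, g, h => by
      rw [sWord, map_commutatorElement, map_commutatorElement]
      rw [FreeGroup.lift_apply_of, FreeGroup.lift_apply_of, FreeGroup.lift_apply_of, FreeGroup.lift_apply_of,
        h 0 (by norm_num), h 1 (by norm_num)]
  | (k+2), f, g, h => by
      rw [sWord, map_commutatorElement, map_commutatorElement, lift_lift_shift, lift_lift_shift]
      rw [sWord_congr (k+1) f g (fun i hi => h i (lt_of_lt_of_le hi
        (Nat.pow_le_pow_right (by norm_num) (by omega)))),
        sWord_congr (k+1) (fun i => f (i + 2^(k+1))) (fun i => g (i + 2^(k+1)))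
          (fun i hi => h _ (by
            have : 2^(k+2) = 2^(k+1) + 2^(k+1) := by ring
            omega))]

theorem closure_commute {G : Type*} [Group G] {S : Set G}
    (h : ∀ a ∈ S, ∀ b ∈ S, Commute a b) :
    ∀ x ∈ Subgroup.closure S, ∀ y ∈ Subgroup.closure S, Commute x y := by
  intro x hx y hy
  refine Subgroup.closure_induction₂ (p := fun a b _ _ => Commute a b)
    (fun a b ha hb => h a ha b hb)
    (fun x _ => Commute.one_left x) (fun x _ => Commute.one_right x)
    (fun x y z _ _ _ h1 h2 => h1.mul_left h2)
    (fun y z x _ _ _ h1 h2 => h1.mul_right h2)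
    (fun x y _ _ h1 => h1.inv_left) (fun x y _ _ h1 => h1.inv_right) hx hy

theorem lift_sWord_one {T : Type*} [Group T] (f : ℕ → T) :
    FreeGroup.lift f (sWord 1) = ⁅f 0, f 1⁆ := by
  rw [sWord, map_commutatorElement, FreeGroup.lift_apply_of, FreeGroup.lift_apply_of]

/-- If all values of `s_{k+1}` in `H` are trivial, then `H` is solvable of derived
length at most `k+1`. -/
theorem sWord_trivial_derivedSeries :
    ∀ (k : ℕ) (H : Type) [Group H],
      (∀ f : ℕ → H, FreeGroup.lift f (sWord (k + 1)) = 1) →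
        derivedSeries H (k + 1) = ⊥
  | 0, H, _, hall => by
      rw [derivedSeries_succ, eq_bot_iff]
      rw [Subgroup.commutator_le]
      intro g1 _ g2 _
      have := hall (fun i => if i = 0 then g1 else g2)
      rw [lift_sWord_one] at this
      simpa [Subgroup.mem_bot] using this
  | (k+1), H, _, hall => by
      set N := verbalSubgroup {sWord (k+1)} H with hN
      have hcomm : ∀ f g : ℕ → H,
          Commute (FreeGroup.lift f (sWord (k+1))) (FreeGroup.lift g (sWord (k+1))) := by
        intro f g
        set h : ℕ → H := fun i => if i < 2^(k+1) then f i else g (i - 2^(k+1)) with hh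
        have h1 : FreeGroup.lift h (sWord (k+1)) = FreeGroup.lift f (sWord (k+1)) :=
          sWord_congr (k+1) h f (fun i hi => by simp [hh, hi])
        have h2 : (fun i => h (i + 2^(k+1))) = g := by
          funext i
          have hni : ¬ (i + 2^(k+1) < 2^(k+1)) := by omega
          simp [hh, hni]
        have hall2 := hall h
        rw [show (k+1+1) = (k+2) from rfl, sWord, map_commutatorElement,
          lift_lift_shift, h1, h2] at hall2
        exact commutatorElement_eq_one_iff_commute.mp hall2
      have hNab : ∀ x ∈ N, ∀ y ∈ N, Commute x y := by
        refine closure_commute ?_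
        rintro a ⟨w, hw, f, rfl⟩ b ⟨w', hw', g, rfl⟩
        rw [Set.mem_singleton_iff] at hw hw'
        subst hw; subst hw'
        exact hcomm f g
      set π := QuotientGroup.mk' N with hπ
      have hq : ∀ f : ℕ → H ⧸ N, FreeGroup.lift f (sWord (k+1)) = 1 := by
        intro f
        have hsurj := QuotientGroup.mk'_surjective N
        set g : ℕ → H := fun i => Classical.choose (hsurj (f i)) with hg
        have hgf : ⇑π ∘ g = f := funext fun i => Classical.choose_spec (hsurj (f i))
        rw [← hgf, ← lift_comp_eval]
        have : FreeGroup.lift g (sWord (k+1)) ∈ N :=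
          Subgroup.subset_closure ⟨sWord (k+1), rfl, g, rfl⟩
        rwa [← QuotientGroup.ker_mk' N, MonoidHom.mem_ker] at this
      have IH := sWord_trivial_derivedSeries k (H ⧸ N) hq
      have hle : derivedSeries H (k+1) ≤ N := by
        have := map_derivedSeries_eq (QuotientGroup.mk'_surjective N) (k+1)
        rw [IH, Subgroup.map_eq_bot_iff, QuotientGroup.ker_mk'] at this
        exact this
      rw [derivedSeries_succ, eq_bot_iff, Subgroup.commutator_le]
      intro g1 h1 g2 h2
      have := hNab g1 (hle h1) g2 (hle h2)
      simpa [Subgroup.mem_bot, commutatorElement_eq_one_iff_commute] using this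

section CommNormal

variable (A B : Type*) [Group A] [Group B]

theorem conj_inl_mem {a' : A} {c : Coprod A B} (hc : c ∈ commSubgroup A B) :
    Coprod.inl a' * c * (Coprod.inl a')⁻¹ ∈ commSubgroup A B := by
  induction hc using Subgroup.closure_induction with
  | mem x hx =>
      obtain ⟨a, b, rfl⟩ := hx
      have key : (Coprod.inl a' : Coprod A B) * ⁅(Coprod.inl a : Coprod A B), Coprod.inr b⁆
          * (Coprod.inl a')⁻¹
          = ⁅(Coprod.inl (a' * a) : Coprod A B), Coprod.inr b⁆
            * ⁅(Coprod.inl a' : Coprod A B), Coprod.inr b⁆⁻¹ := by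
        rw [map_mul]; group
      rw [key]
      exact mul_mem (Subgroup.subset_closure ⟨a' * a, b, rfl⟩)
        (inv_mem (Subgroup.subset_closure ⟨a', b, rfl⟩))
  | one => simpa using one_mem _
  | mul x y _ _ hx hy =>
      have key : Coprod.inl a' * (x * y) * (Coprod.inl a')⁻¹
          = (Coprod.inl a' * x * (Coprod.inl a')⁻¹) * (Coprod.inl a' * y * (Coprod.inl a')⁻¹) := by
        group
      rw [key]; exact mul_mem hx hy
  | inv x _ hx =>
      have key : Coprod.inl a' * x⁻¹ * (Coprod.inl a')⁻¹
          = (Coprod.inl a' * x * (Coprod.inl a')⁻¹)⁻¹ := by group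
      rw [key]; exact inv_mem hx

theorem conj_inr_mem {b' : B} {c : Coprod A B} (hc : c ∈ commSubgroup A B) :
    Coprod.inr b' * c * (Coprod.inr b')⁻¹ ∈ commSubgroup A B := by
  induction hc using Subgroup.closure_induction with
  | mem x hx =>
      obtain ⟨a, b, rfl⟩ := hx
      have key : (Coprod.inr b' : Coprod A B) * ⁅(Coprod.inl a : Coprod A B), Coprod.inr b⁆
          * (Coprod.inr b')⁻¹
          = ⁅(Coprod.inl a : Coprod A B), Coprod.inr b'⁆⁻¹
            * ⁅(Coprod.inl a : Coprod A B), Coprod.inr (b' * b)⁆ := by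
        rw [map_mul]; group
      rw [key]
      exact mul_mem (inv_mem (Subgroup.subset_closure ⟨a, b', rfl⟩))
        (Subgroup.subset_closure ⟨a, b' * b, rfl⟩)
  | one => simpa using one_mem _
  | mul x y _ _ hx hy =>
      have key : Coprod.inr b' * (x * y) * (Coprod.inr b')⁻¹
          = (Coprod.inr b' * x * (Coprod.inr b')⁻¹) * (Coprod.inr b' * y * (Coprod.inr b')⁻¹) := by
        group
      rw [key]; exact mul_mem hx hy
  | inv x _ hx =>
      have key : Coprod.inr b' * x⁻¹ * (Coprod.inr b')⁻¹
          = (Coprod.inr b' * x * (Coprod.inr b')⁻¹)⁻¹ := by group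
      rw [key]; exact inv_mem hx

instance commSubgroup_normal : (commSubgroup A B).Normal := by
  rw [← Subgroup.normalizer_eq_top_iff, eq_top_iff, ← Coprod.closure_range_inl_union_inr,
    Subgroup.closure_le]
  rintro g (⟨a, rfl⟩ | ⟨b, rfl⟩)
  · rw [SetLike.mem_coe, Subgroup.mem_normalizer_iff]
    intro h
    constructor
    · intro hh
      exact conj_inl_mem A B hh
    · intro hh
      have h2 := conj_inl_mem A B (a' := a⁻¹) hh
      rw [map_inv] at h2
      have key : (Coprod.inl a : Coprod A B)⁻¹ * (Coprod.inl a * h * (Coprod.inl a)⁻¹)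
          * ((Coprod.inl a : Coprod A B)⁻¹)⁻¹ = h := by group
      rwa [key] at h2
  · rw [SetLike.mem_coe, Subgroup.mem_normalizer_iff]
    intro h
    constructor
    · intro hh
      exact conj_inr_mem A B hh
    · intro hh
      have h2 := conj_inr_mem A B (b' := b⁻¹) hh
      rw [map_inv] at h2
      have key : (Coprod.inr b : Coprod A B)⁻¹ * (Coprod.inr b * h * (Coprod.inr b)⁻¹)
          * ((Coprod.inr b : Coprod A B)⁻¹)⁻¹ = h := by group
      rwa [key] at h2

/-- The kernel of the canonical map `A ∗ B → A × B` is contained in `[A, B]`. -/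
theorem ker_to_prod_le_comm :
    (Coprod.lift (MonoidHom.inl A B) (MonoidHom.inr A B)).ker ≤ commSubgroup A B := by
  set q := QuotientGroup.mk' (commSubgroup A B) with hq
  have hcomm : ∀ (a : A) (b : B), Commute ((q.comp Coprod.inl) a) ((q.comp Coprod.inr) b) := by
    intro a b
    rw [← commutatorElement_eq_one_iff_commute]
    have : ⁅(Coprod.inl a : Coprod A B), Coprod.inr b⁆ ∈ commSubgroup A B :=
      Subgroup.subset_closure ⟨a, b, rfl⟩
    rw [← QuotientGroup.ker_mk' (commSubgroup A B), MonoidHom.mem_ker] at this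
    simpa [map_commutatorElement, hq] using this
  set ψ := MonoidHom.noncommCoprod (q.comp Coprod.inl) (q.comp Coprod.inr) hcomm with hψ
  have hfac : ψ.comp (Coprod.lift (MonoidHom.inl A B) (MonoidHom.inr A B)) = q := by
    apply Coprod.hom_ext <;> ext x <;>
      simp [hψ, MonoidHom.noncommCoprod]
  intro x hx
  rw [MonoidHom.mem_ker] at hx
  have : q x = 1 := by
    rw [← hfac]
    simp [hx]
  rwa [← QuotientGroup.ker_mk' (commSubgroup A B), MonoidHom.mem_ker]

end CommNormal

theorem sWord_isCommutator (k : ℕ) (hk : 1 ≤ k) :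
    ∃ u v : FreeGroup ℕ, sWord k = ⁅u, v⁆ := by
  match k, hk with
  | 1, _ => exact ⟨_, _, by rw [sWord]⟩
  | (k+2), _ => exact ⟨_, _, by rw [sWord]⟩

theorem verbal_le_comm {A B : Type*} [CommGroup A] [CommGroup B] (k : ℕ) (hk : 1 ≤ k) :
    verbalSubgroup {sWord k} (Coprod A B) ≤ commSubgroup A B := by
  refine le_trans ?_ (ker_to_prod_le_comm A B)
  rw [verbalSubgroup, Subgroup.closure_le]
  rintro x ⟨w, hw, f, rfl⟩
  rw [Set.mem_singleton_iff] at hw; subst hw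
  rw [SetLike.mem_coe, MonoidHom.mem_ker, lift_comp_eval]
  obtain ⟨u, v, huv⟩ := sWord_isCommutator k hk
  rw [huv, map_commutatorElement]
  exact commutatorElement_eq_one_iff_commute.mpr (mul_comm _ _)

/-! ### An infinite metabelian group generated by two elements of order `n` -/

noncomputable section TargetGroup

/-- Multiplication by a unit, as a `MulAut` of `Multiplicative ℂ`. -/
def unitsSmulAut : ℂˣ →* MulAut (Multiplicative ℂ) where
  toFun v := AddEquiv.toMultiplicative (DistribMulAction.toAddAut ℂˣ ℂ v)
  map_one' := by ext x; simp [AddEquiv.toMultiplicative]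
  map_mul' u v := by ext x; simp [AddEquiv.toMultiplicative, mul_smul]

def zeta (n : ℕ) : ℂ := Complex.exp (2 * Real.pi * Complex.I / n)

theorem zeta_prim (n : ℕ) (hn : 2 ≤ n) : IsPrimitiveRoot (zeta n) n :=
  Complex.isPrimitiveRoot_exp n (by omega)

def zetaU (n : ℕ) (hn : 2 ≤ n) : ℂˣ := ((zeta_prim n hn).isUnit (by omega)).unit

theorem zetaU_pow (n : ℕ) (hn : 2 ≤ n) : zetaU n hn ^ n = 1 := by
  ext
  push_cast
  simpa [zetaU] using (zeta_prim n hn).pow_eq_one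

/-- The homomorphism `ZMod n → ℂˣ` sending `1` to `ζ`. -/
def chiU (n : ℕ) (hn : 2 ≤ n) : Multiplicative (ZMod n) →* ℂˣ :=
  AddMonoidHom.toMultiplicativeLeft
    (ZMod.lift n ⟨zmultiplesHom (Additive ℂˣ) (Additive.ofMul (zetaU n hn)), by
      simpa [zmultiplesHom, ← ofMul_pow] using congrArg Additive.ofMul (zetaU_pow n hn)⟩)

theorem chiU_one (n : ℕ) (hn : 2 ≤ n) :
    chiU n hn (Multiplicative.ofAdd (1 : ZMod n)) = zetaU n hn := by
  have h1 : (1 : ZMod n) = ((1 : ℤ) : ZMod n) := by push_cast; ring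
  simp only [chiU, AddMonoidHom.toMultiplicativeLeft, Equiv.coe_fn_mk, MonoidHom.coe_mk,
    OneHom.coe_mk, toAdd_ofAdd]
  rw [h1]
  change Additive.toMul (ZMod.lift n _ (((1 : ℤ) : ZMod n))) = _
  rw [ZMod.lift_coe]
  simp [zmultiplesHom]

def phiT (n : ℕ) (hn : 2 ≤ n) : Multiplicative (ZMod n) →* MulAut (Multiplicative ℂ) :=
  unitsSmulAut.comp (chiU n hn)

/-- The semidirect product `ℂ ⋊ ZMod n`, with `1 : ZMod n` acting as multiplication
by the primitive root `ζ`. -/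
abbrev TGroup (n : ℕ) (hn : 2 ≤ n) :=
  SemidirectProduct (Multiplicative ℂ) (Multiplicative (ZMod n)) (phiT n hn)

theorem TGroup_derivedSeries_two (n : ℕ) (hn : 2 ≤ n) :
    derivedSeries (TGroup n hn) 2 = ⊥ := by
  have h1 : derivedSeries (TGroup n hn) 1 ≤ SemidirectProduct.inl.range := by
    rw [SemidirectProduct.range_inl_eq_ker_rightHom, derivedSeries_succ,
      Subgroup.commutator_le]
    intro x _ y _
    rw [MonoidHom.mem_ker, map_commutatorElement]
    exact commutatorElement_eq_one_iff_commute.mpr (mul_comm _ _)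
  rw [show (2 : ℕ) = 1 + 1 from rfl, derivedSeries_succ, eq_bot_iff, Subgroup.commutator_le]
  intro x hx y hy
  obtain ⟨nx, rfl⟩ := h1 hx
  obtain ⟨ny, rfl⟩ := h1 hy
  rw [Subgroup.mem_bot, ← map_commutatorElement]
  rw [commutatorElement_eq_one_iff_commute.mpr (mul_comm nx ny)]
  exact map_one _

theorem TGroup_derivedSeries_eq_bot (n : ℕ) (hn : 2 ≤ n) (k : ℕ) (hk : 2 ≤ k) :
    derivedSeries (TGroup n hn) k = ⊥ := by
  induction k with
  | zero => omega
  | succ m ih =>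
      rcases Nat.lt_or_ge m 2 with h | h
      · interval_cases m
        · omega
        · exact TGroup_derivedSeries_two n hn
      · rw [derivedSeries_succ, ih h, Subgroup.commutator_bot_left]

def tEl (n : ℕ) (hn : 2 ≤ n) : TGroup n hn :=
  SemidirectProduct.inl (Multiplicative.ofAdd (1 : ℂ))

/-- The homomorphism from the free product of two copies of `ZMod n` to `TGroup`,
sending the first copy to the rotation `ζ·` and the second copy to its conjugate
by the translation by `1`. -/
def chiHom (n : ℕ) (hn : 2 ≤ n) :
    Coprod (Multiplicative (ZMod n)) (Multiplicative (ZMod n)) →* TGroup n hn :=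
  Coprod.lift SemidirectProduct.inr
    ((MulAut.conj (tEl n hn)).toMonoidHom.comp SemidirectProduct.inr)

def cEl (n : ℕ) (hn : 2 ≤ n) : Multiplicative ℂ :=
  phiT n hn (Multiplicative.ofAdd (1 : ZMod n))⁻¹ (Multiplicative.ofAdd (1 : ℂ))
    * (Multiplicative.ofAdd (1 : ℂ))⁻¹

theorem sdp_key {N G : Type*} [Group N] [Group G] {φ : G →* MulAut N} (g : G) (τ : N) :
    (SemidirectProduct.inr g : SemidirectProduct N G φ)⁻¹ *
      (SemidirectProduct.inl τ * SemidirectProduct.inr g * (SemidirectProduct.inl τ)⁻¹)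
      = SemidirectProduct.inl ((φ g⁻¹) τ * τ⁻¹) := by
  rw [map_mul, SemidirectProduct.inl_aut]
  simp only [map_inv]
  group

theorem chi_z (n : ℕ) (hn : 2 ≤ n) :
    (chiHom n hn (Coprod.inl (Multiplicative.ofAdd (1 : ZMod n))))⁻¹
      * chiHom n hn (Coprod.inr (Multiplicative.ofAdd (1 : ZMod n)))
      = SemidirectProduct.inl (cEl n hn) := by
  set g := Multiplicative.ofAdd (1 : ZMod n)
  set τ := Multiplicative.ofAdd (1 : ℂ)
  have h1 : chiHom n hn (Coprod.inl g) = SemidirectProduct.inr g := by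
    simp [chiHom]
  have h2 : chiHom n hn (Coprod.inr g) =
      tEl n hn * SemidirectProduct.inr g * (tEl n hn)⁻¹ := by
    simp [chiHom, MulAut.conj]
  rw [h1, h2, cEl]
  exact sdp_key g τ

theorem toAdd_cEl (n : ℕ) (hn : 2 ≤ n) :
    Multiplicative.toAdd (cEl n hn) = ((zetaU n hn)⁻¹ : ℂˣ) - 1 := by
  rw [cEl]
  have : phiT n hn (Multiplicative.ofAdd (1 : ZMod n))⁻¹ (Multiplicative.ofAdd (1 : ℂ))
      = Multiplicative.ofAdd ((((zetaU n hn)⁻¹ : ℂˣ) : ℂ)) := by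
    rw [phiT, MonoidHom.comp_apply, map_inv, chiU_one]
    show AddEquiv.toMultiplicative (DistribMulAction.toAddAut ℂˣ ℂ (zetaU n hn)⁻¹)
      (Multiplicative.ofAdd (1:ℂ)) = _
    simp [AddEquiv.toMultiplicative, DistribMulAction.toAddAut_apply, Units.smul_def]
  rw [this]
  simp [sub_eq_add_neg]

theorem cEl_ne_one (n : ℕ) (hn : 2 ≤ n) : Multiplicative.toAdd (cEl n hn) ≠ 0 := by
  rw [toAdd_cEl n hn]
  intro h
  rw [sub_eq_zero] at h
  have h2 : ((zetaU n hn)⁻¹ : ℂˣ) = 1 := Units.ext (by simpa using h)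
  rw [inv_eq_one] at h2
  have : zeta n = 1 := by
    have := congrArg (Units.val) h2
    simpa [zetaU] using this
  exact (zeta_prim n hn).ne_one (by omega) this

theorem zpowCElInj (n : ℕ) (hn : 2 ≤ n) :
    Function.Injective (fun m : ℤ => (SemidirectProduct.inl (cEl n hn) : TGroup n hn) ^ m) := by
  intro m m' h
  simp only [← map_zpow] at h
  have h2 := SemidirectProduct.inl_injective h
  have h3 := congrArg Multiplicative.toAdd h2
  rw [toAdd_zpow, toAdd_zpow] at h3
  have hc := cEl_ne_one n hn
  rw [zsmul_eq_mul, zsmul_eq_mul] at h3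
  have := mul_right_cancel₀ hc h3
  exact_mod_cast this

end TargetGroup

theorem verbalProductKer_eq (n k : ℕ) (hn : 2 ≤ n) (hk : 2 ≤ k) :
    verbalProductKer {sWord k} (Multiplicative (ZMod n)) (Multiplicative (ZMod n))
      = verbalSubgroup {sWord k}
          (Coprod (Multiplicative (ZMod n)) (Multiplicative (ZMod n))) := by
  have hVC := verbal_le_comm (A := Multiplicative (ZMod n)) (B := Multiplicative (ZMod n)) k
    (by omega)
  rw [verbalProductKer, inf_eq_left.mpr hVC]
  exact Subgroup.normalClosure_eq_self _

/-- For `n ≥ 2` and `k ≥ 2`, the `k`-solvable product `(ℤ/nℤ) ∗_{s_k} (ℤ/nℤ)` is an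
infinite solvable group; in particular a verbal product of two finite groups can be
infinite. -/
theorem solvableProduct_zmod_infinite (n k : ℕ) (hn : 2 ≤ n) (hk : 2 ≤ k) :
    Infinite (VerbalProduct {sWord k} (Multiplicative (ZMod n)) (Multiplicative (ZMod n))) ∧
    IsSolvable (VerbalProduct {sWord k} (Multiplicative (ZMod n)) (Multiplicative (ZMod n))) := by
  have hK := verbalProductKer_eq n k hn hk
  constructor
  · -- infinite
    have hker : verbalProductKer {sWord k} (Multiplicative (ZMod n)) (Multiplicative (ZMod n))
        ≤ (chiHom n hn).ker := by
      rw [hK, verbalSubgroup, Subgroup.closure_le]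
      rintro x ⟨w, hw, f, rfl⟩
      rw [Set.mem_singleton_iff] at hw; subst hw
      rw [SetLike.mem_coe, MonoidHom.mem_ker, lift_comp_eval]
      have hmem := sWord_mem_derivedSeries (T := TGroup n hn) k (⇑(chiHom n hn) ∘ f)
      rw [TGroup_derivedSeries_eq_bot n hn k hk] at hmem
      simpa using hmem
    set χbar := QuotientGroup.lift
      (verbalProductKer {sWord k} (Multiplicative (ZMod n)) (Multiplicative (ZMod n)))
      (chiHom n hn) hker with hχ
    set g := Multiplicative.ofAdd (1 : ZMod n) with hg
    set wEl : VerbalProduct {sWord k} (Multiplicative (ZMod n)) (Multiplicative (ZMod n)) :=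
      (vq {sWord k} _ _ (Coprod.inl g))⁻¹ * vq {sWord k} _ _ (Coprod.inr g) with hw
    have hbase : χbar wEl = SemidirectProduct.inl (cEl n hn) := by
      rw [hw, map_mul, map_inv]
      have e1 : χbar (vq {sWord k} _ _ (Coprod.inl g)) = chiHom n hn (Coprod.inl g) := rfl
      have e2 : χbar (vq {sWord k} _ _ (Coprod.inr g)) = chiHom n hn (Coprod.inr g) := rfl
      rw [e1, e2]
      exact chi_z n hn
    refine Infinite.of_injective (fun m : ℤ => wEl ^ m) ?_
    intro m m' h
    have h' : wEl ^ m = wEl ^ m' := h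
    refine zpowCElInj n hn ?_
    show (SemidirectProduct.inl (cEl n hn) : TGroup n hn) ^ m = _ ^ m'
    rw [← hbase, ← map_zpow, ← map_zpow, h']
  · -- solvable
    obtain ⟨k', rfl⟩ : ∃ k', k = k' + 1 := ⟨k - 1, by omega⟩
    rw [IsSolvable, Group.isSolvable_def]
    refine ⟨k' + 1, ?_⟩
    apply sWord_trivial_derivedSeries k'
    intro f
    have hsurj := QuotientGroup.mk'_surjective
      (verbalProductKer {sWord (k' + 1)} (Multiplicative (ZMod n)) (Multiplicative (ZMod n)))
    set gl : ℕ → Coprod (Multiplicative (ZMod n)) (Multiplicative (ZMod n)) :=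
      fun i => Classical.choose (hsurj (f i)) with hgl
    have hgf : ⇑(QuotientGroup.mk'
        (verbalProductKer {sWord (k' + 1)} (Multiplicative (ZMod n))
          (Multiplicative (ZMod n)))) ∘ gl = f :=
      funext fun i => Classical.choose_spec (hsurj (f i))
    rw [← hgf, ← lift_comp_eval]
    have hmem : FreeGroup.lift gl (sWord (k' + 1)) ∈
        verbalSubgroup {sWord (k' + 1)}
          (Coprod (Multiplicative (ZMod n)) (Multiplicative (ZMod n))) :=
      Subgroup.subset_closure ⟨sWord (k' + 1), rfl, gl, rfl⟩
    rw [← hK] at hmem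
    rw [← MonoidHom.mem_ker, QuotientGroup.ker_mk']
    exact hmem
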